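/- The number of balanced Boolean functions on F_2^n of degree at most n/2 (n even, n ≥ 2) satisfies |A^{n/2}_n(2^{n-1})| ≥ 2^{2^{n-1}−1} / 2^{2n−2}. -/

import Mathlib

/-- The monomial `x_1^{y_1} ⋯ x_n^{y_n}`. -/
def monom {n : ℕ} (y x : Fin n → ZMod 2) : ZMod 2 := ∏ i, (x i) ^ (y i).val

/-- Hamming weight of a vector. -/
def hwt {n : ℕ} (y : Fin n → ZMod 2) : ℕ := (Finset.univ.filter fun i => y i = 1).card

/-- A Boolean function has algebraic degree at most `k` if its algebraic normal
form uses only monomials of degree at most `k`. -/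
def degLE (n k : ℕ) (f : (Fin n → ZMod 2) → ZMod 2) : Prop :=
  ∃ g : (Fin n → ZMod 2) → ZMod 2,
    (∀ y, k < hwt y → g y = 0) ∧ ∀ x, f x = ∑ y, g y * monom y x

/-- Weight of a Boolean function: the number of inputs where it equals `1`. -/
def wt {n : ℕ} (f : (Fin n → ZMod 2) → ZMod 2) : ℕ :=
  (Finset.univ.filter fun x => f x = 1).card

/-- `A n k t` is the set of Boolean functions on `F_2^n` of algebraic degree at
most `k` and weight `t`. -/
def A (n k t : ℕ) : Set ((Fin n → ZMod 2) → ZMod 2) :=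
  {f | degLE n k f ∧ wt f = t}


open Finset

lemma zmval (v : ZMod 2) : v.val = (if v = 1 then 1 else 0 : ℕ) := by revert v; decide

lemma hwt_eq_sum {m : ℕ} (y : Fin m → ZMod 2) : hwt y = ∑ i, (y i).val := by
  simp only [zmval, hwt, Finset.card_filter]

lemma hwt_cons {m : ℕ} (b : ZMod 2) (y : Fin m → ZMod 2) :
    hwt (Fin.cons b y) = b.val + hwt y := by
  simp [hwt_eq_sum, Fin.sum_univ_succ]

lemma monom_cons {m : ℕ} (b : ZMod 2) (y : Fin m → ZMod 2) (x : Fin (m+1) → ZMod 2) :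
    monom (Fin.cons b y) x = (x 0) ^ b.val * monom y (Fin.tail x) := by
  simp [monom, Fin.prod_univ_succ, Fin.tail]

lemma monom_self {m : ℕ} (y : Fin m → ZMod 2) : monom y y = 1 := by
  have h : ∀ v : ZMod 2, v ^ v.val = 1 := by decide
  simp [monom, h]

lemma monom_support {m : ℕ} {y x : Fin m → ZMod 2} (h : monom y x ≠ 0) :
    ∀ i, y i = 1 → x i = 1 := by
  intro i hi
  rw [monom, Finset.prod_ne_zero_iff] at h
  have h2 : ∀ v : ZMod 2, v ^ (1 : ZMod 2).val ≠ 0 → v = 1 := by decide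
  apply h2
  have := h i (Finset.mem_univ i)
  rwa [hi] at this

lemma anf_unique {m : ℕ} (g : (Fin m → ZMod 2) → ZMod 2)
    (h : ∀ x, ∑ y, g y * monom y x = 0) : ∀ y, g y = 0 := by
  by_contra hc
  push_neg at hc
  have hs : (univ.filter fun y => g y ≠ 0).Nonempty := by
    obtain ⟨y, hy⟩ := hc
    exact ⟨y, by simp [hy]⟩
  obtain ⟨y₀, hy₀, hmin⟩ := Finset.exists_min_image _ hwt hs
  simp only [mem_filter, mem_univ, true_and] at hy₀
  have hsum := h y₀
  rw [Finset.sum_eq_single y₀] at hsum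
  · rw [monom_self, mul_one] at hsum
    exact hy₀ hsum
  · intro y _ hne
    by_cases hgy : g y = 0
    · rw [hgy, zero_mul]
    · by_cases hmono0 : monom y y₀ = 0
      · rw [hmono0, mul_zero]
      exfalso
      have hmono : monom y y₀ ≠ 0 := hmono0
      have hsub : (univ.filter fun i => y i = 1) ⊆ (univ.filter fun i => y₀ i = 1) := by
        intro i hi
        simp only [mem_filter, mem_univ, true_and] at *
        exact monom_support hmono i hi
      have hle : hwt y₀ ≤ hwt y := hmin y (by simp [hgy])
      have heq : (univ.filter fun i => y i = 1) = (univ.filter fun i => y₀ i = 1) :=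
        Finset.eq_of_subset_of_card_le hsub hle
      apply hne
      funext i
      have h01 : ∀ v : ZMod 2, v = 0 ∨ v = 1 := by decide
      rcases h01 (y i) with h1 | h1 <;> rcases h01 (y₀ i) with h2 | h2
      · rw [h1, h2]
      · exfalso
        have hm : i ∈ (univ.filter fun i => y i = 1) := by
          rw [heq]; simp [h2]
        simp only [mem_filter, h1] at hm
        exact zero_ne_one hm.2
      · exfalso
        have hm : i ∈ (univ.filter fun i => y₀ i = 1) := by
          rw [← heq]; simp [h1]
        simp only [mem_filter, h2] at hm
        exact zero_ne_one hm.2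
      · rw [h1, h2]
  · intro hy
    exact absurd (mem_univ y₀) hy

open Classical in
lemma card_degLE_ge (m k : ℕ) :
    2 ^ (univ.filter fun y : Fin m → ZMod 2 => hwt y ≤ k).card ≤
      (univ.filter fun f : (Fin m → ZMod 2) → ZMod 2 => degLE m k f).card := by
  classical
  set S := (univ.filter fun y : Fin m → ZMod 2 => hwt y ≤ k) with hS
  -- source type
  have hcard : Fintype.card ({y : Fin m → ZMod 2 // hwt y ≤ k} → ZMod 2) = 2 ^ S.card := by
    rw [Fintype.card_fun, Fintype.card_subtype]
    rfl
  set ext : ({y : Fin m → ZMod 2 // hwt y ≤ k} → ZMod 2) → ((Fin m → ZMod 2) → ZMod 2) :=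
    fun c y => if h : hwt y ≤ k then c ⟨y, h⟩ else 0 with hext
  set Ψ : ({y : Fin m → ZMod 2 // hwt y ≤ k} → ZMod 2) → ((Fin m → ZMod 2) → ZMod 2) :=
    fun c x => ∑ y, ext c y * monom y x with hΨ
  have hmaps : ∀ c, degLE m k (Ψ c) := by
    intro c
    refine ⟨ext c, fun y hy => ?_, fun x => rfl⟩
    simp only [hext]
    rw [dif_neg (by omega)]
  have hinj : Function.Injective Ψ := by
    intro c c' hcc
    have hz : ∀ x, ∑ y, (ext c y + ext c' y) * monom y x = 0 := by
      intro x
      have h1 : Ψ c x = Ψ c' x := by rw [hcc]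
      simp only [hΨ] at h1
      simp only [add_mul, Finset.sum_add_distrib, h1]
      have : ∀ a : ZMod 2, a + a = 0 := by decide
      exact this _
    have hzz := anf_unique _ hz
    funext y
    have := hzz y.1
    simp only [hext, dif_pos y.2] at this
    have h2 : ∀ a b : ZMod 2, a + b = 0 → a = b := by decide
    exact h2 _ _ (by convert this using 3 <;> exact Subtype.eta _ _)
  calc 2 ^ S.card = (univ : Finset ({y : Fin m → ZMod 2 // hwt y ≤ k} → ZMod 2)).card := by
        rw [Finset.card_univ, hcard]
    _ ≤ _ := by
        apply Finset.card_le_card_of_injOn Ψ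
        · intro c _
          simp only [Finset.mem_coe, mem_filter, mem_univ, true_and]
          exact hmaps c
        · exact hinj.injOn

lemma card_V (m : ℕ) : Fintype.card (Fin m → ZMod 2) = 2 ^ m := by
  simp [Fintype.card_fun]

-- complement of a vector / function
lemma hwt_compl {m : ℕ} (y : Fin m → ZMod 2) :
    hwt (fun i => y i + 1) = m - hwt y := by
  have key : (univ.filter fun i => y i + 1 = 1).card
      + (univ.filter fun i => y i = 1).card = m := by
    have hiff : ∀ i, (y i + 1 = 1) ↔ ¬ (y i = 1) := by
      intro i
      have : ∀ v : ZMod 2, (v + 1 = 1) ↔ ¬ (v = 1) := by decide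
      exact this _
    rw [Finset.filter_congr (fun i _ => by rw [hiff i])]
    have := Finset.card_filter_add_card_filter_not
      (s := (univ : Finset (Fin m))) (p := fun i => y i = 1)
    simp only [Finset.card_univ, Fintype.card_fin] at this
    omega
  simp only [hwt] at *
  omega

lemma card_low (j : ℕ) :
    2 ^ (2*j+1) ≤ 2 * (univ.filter fun y : Fin (2*j+1) → ZMod 2 => hwt y ≤ j).card := by
  set S := (univ.filter fun y : Fin (2*j+1) → ZMod 2 => hwt y ≤ j) with hS
  have hwle : ∀ y : Fin (2*j+1) → ZMod 2, hwt y ≤ 2*j+1 := by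
    intro y
    calc hwt y ≤ (univ : Finset (Fin (2*j+1))).card := Finset.card_filter_le _ _
      _ = 2*j+1 := by simp
  have hcompl : (univ.filter fun y : Fin (2*j+1) → ZMod 2 => ¬ hwt y ≤ j).card ≤ S.card := by
    apply Finset.card_le_card_of_injOn (fun y => fun i => y i + 1)
    · intro y hy
      simp only [Finset.mem_coe, mem_filter, mem_univ, true_and, hS] at *
      rw [hwt_compl]
      omega
    · intro y _ y' _ h
      funext i
      have h2 : ∀ a b : ZMod 2, a + 1 = b + 1 → a = b := by decide
      exact h2 _ _ (congrFun h i)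
  have hsplit := Finset.card_filter_add_card_filter_not
    (s := (univ : Finset (Fin (2*j+1) → ZMod 2))) (p := fun y => hwt y ≤ j)
  rw [Finset.card_univ, card_V, ← hS] at hsplit
  omega

def glue {m : ℕ} (f₀ f₁ : (Fin m → ZMod 2) → ZMod 2) : (Fin (m+1) → ZMod 2) → ZMod 2 :=
  fun x => f₀ (Fin.tail x) + x 0 * (f₀ (Fin.tail x) + f₁ (Fin.tail x))

lemma glue_cons {m : ℕ} (f₀ f₁ : (Fin m → ZMod 2) → ZMod 2) (b : ZMod 2)
    (x' : Fin m → ZMod 2) :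
    glue f₀ f₁ (Fin.cons b x') = if b = 1 then f₁ x' else f₀ x' := by
  have h : ∀ a c : ZMod 2, ∀ b : ZMod 2,
      a + b * (a + c) = if b = 1 then c else a := by decide
  simp [glue, Fin.tail_cons, Fin.cons_zero, h]

lemma wt_glue {m : ℕ} (f₀ f₁ : (Fin m → ZMod 2) → ZMod 2) :
    wt (glue f₀ f₁) = wt f₀ + wt f₁ := by
  classical
  rw [wt, Finset.card_filter, wt, wt, Finset.card_filter, Finset.card_filter]
  rw [← Fintype.sum_equiv (Fin.consEquiv (fun _ : Fin (m+1) => ZMod 2))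
    (fun p => if glue f₀ f₁ (Fin.cons p.1 p.2) = 1 then 1 else 0)
    (fun x => if glue f₀ f₁ x = 1 then 1 else 0) (fun p => rfl)]
  rw [Fintype.sum_prod_type]
  have hz : (univ : Finset (ZMod 2)) = {0, 1} := by decide
  have hsum : ∀ F : ZMod 2 → ℕ, ∑ b : ZMod 2, F b = F 0 + F 1 := by
    intro F
    rw [hz, Finset.sum_insert (by decide), Finset.sum_singleton]
  rw [hsum]
  simp only [glue_cons]
  norm_num

lemma wt_le {m : ℕ} (f : (Fin m → ZMod 2) → ZMod 2) : wt f ≤ 2 ^ m := by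
  calc wt f ≤ (univ : Finset (Fin m → ZMod 2)).card := Finset.card_filter_le _ _
    _ = 2 ^ m := by rw [Finset.card_univ, card_V]

lemma wt_add_one {m : ℕ} (f : (Fin m → ZMod 2) → ZMod 2) :
    wt (fun x => f x + 1) = 2 ^ m - wt f := by
  have hiff : ∀ x, (f x + 1 = 1) ↔ ¬ (f x = 1) := by
    intro x
    have : ∀ v : ZMod 2, (v + 1 = 1) ↔ ¬ (v = 1) := by decide
    exact this _
  have hsplit := Finset.card_filter_add_card_filter_not
    (s := (univ : Finset (Fin m → ZMod 2))) (p := fun x => f x = 1)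
  rw [Finset.card_univ, card_V] at hsplit
  rw [wt, Finset.filter_congr (fun x _ => by rw [hiff x])]
  rw [wt]
  omega

lemma degLE_one {m k : ℕ} : degLE m k (fun _ => 1) := by
  classical
  set G : (Fin m → ZMod 2) → ZMod 2 := fun y => if y = (fun _ => 0) then 1 else 0 with hG
  refine ⟨G, fun y hy => ?_, fun x => ?_⟩
  · rw [hG]
    beta_reduce
    rw [if_neg]
    intro h
    rw [h] at hy
    have : hwt (fun _ : Fin m => (0 : ZMod 2)) = 0 := by
      simp [hwt]
    omega
  · rw [Finset.sum_eq_single (fun _ => (0 : ZMod 2))]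
    · simp [hG, monom]
    · intro y _ hne
      rw [hG]
      beta_reduce
      rw [if_neg hne, zero_mul]
    · intro h
      exact absurd (mem_univ _) h

lemma degLE_add {m k : ℕ} {f f' : (Fin m → ZMod 2) → ZMod 2}
    (hf : degLE m k f) (hf' : degLE m k f') : degLE m k (fun x => f x + f' x) := by
  obtain ⟨g, hg, hfg⟩ := hf
  obtain ⟨g', hg', hfg'⟩ := hf'
  refine ⟨fun y => g y + g' y, fun y hy => by
    beta_reduce; rw [hg y hy, hg' y hy, add_zero], fun x => ?_⟩
  simp only [add_mul, Finset.sum_add_distrib, hfg, hfg']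

lemma degLE_glue {m k : ℕ} {f₀ f₁ : (Fin m → ZMod 2) → ZMod 2}
    (h₀ : degLE m k f₀) (h₁ : degLE m k f₁) : degLE (m+1) (k+1) (glue f₀ f₁) := by
  classical
  obtain ⟨g₀, hg₀, hfg₀⟩ := h₀
  obtain ⟨g₁, hg₁, hfg₁⟩ := h₁
  set G : (Fin (m+1) → ZMod 2) → ZMod 2 :=
    fun y => if y 0 = 1 then g₀ (Fin.tail y) + g₁ (Fin.tail y) else g₀ (Fin.tail y) with hG
  refine ⟨G, fun y hy => ?_, fun x => ?_⟩
  · have hy' : hwt y = (y 0).val + hwt (Fin.tail y) := by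
      conv_lhs => rw [← Fin.cons_self_tail y]
      rw [hwt_cons]
    have hval : (y 0).val ≤ 1 := by
      have : ∀ v : ZMod 2, v.val ≤ 1 := by decide
      exact this _
    have htail : k < hwt (Fin.tail y) := by omega
    rw [hG]
    beta_reduce
    rw [hg₀ _ htail, hg₁ _ htail]
    simp
  · rw [← Fintype.sum_equiv (Fin.consEquiv (fun _ : Fin (m+1) => ZMod 2))
      (fun p : ZMod 2 × (Fin m → ZMod 2) =>
        G (Fin.cons p.1 p.2) * monom (Fin.cons p.1 p.2) x)
      (fun y => G y * monom y x) (fun p => rfl)]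
    rw [Fintype.sum_prod_type]
    have hz : (univ : Finset (ZMod 2)) = {0, 1} := by decide
    have hsum : ∀ F : ZMod 2 → ZMod 2, ∑ b : ZMod 2, F b = F 0 + F 1 := by
      intro F
      rw [hz, Finset.sum_insert (by decide), Finset.sum_singleton]
    rw [hsum]
    simp only [hG, Fin.cons_zero, Fin.tail_cons, monom_cons]
    norm_num
    rw [glue, hfg₀, hfg₁]
    have e1 : ∀ g : (Fin m → ZMod 2) → ZMod 2,
        x 0 * ∑ y, g y * monom y (Fin.tail x)
          = ∑ y, g y * (x 0 * monom y (Fin.tail x)) := by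
      intro g
      rw [Finset.mul_sum]
      exact Finset.sum_congr rfl (fun y _ => by ring)
    have hv : (1 : ZMod 2).val = 1 := rfl
    simp only [hv, pow_one, mul_add, add_mul, Finset.sum_add_distrib, e1]

theorem core (j : ℕ) :
    2 ^ (2 ^ (2*j+1) - 1) ≤ (A (2*j+1+1) (j+1) (2 ^ (2*j+1))).ncard * 2 ^ (4*j+2) := by
  classical
  set m := 2*j+1 with hm
  -- the collection of degree ≤ j functions on m variables
  set D := (univ.filter fun f : (Fin m → ZMod 2) → ZMod 2 => degLE m j f) with hD
  have hsize : 2 ^ (2 ^ (2*j)) ≤ D.card := by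
    have h1 := card_degLE_ge m j
    have h2 : 2 ^ (2*j+1) ≤ 2 * (univ.filter fun y : Fin m → ZMod 2 => hwt y ≤ j).card :=
      card_low j
    have h3 : 2 ^ (2*j) ≤ (univ.filter fun y : Fin m → ZMod 2 => hwt y ≤ j).card := by
      have : 2 ^ (2*j+1) = 2 * 2 ^ (2*j) := by ring
      omega
    calc 2 ^ (2 ^ (2*j)) ≤ 2 ^ (univ.filter fun y : Fin m → ZMod 2 => hwt y ≤ j).card :=
          Nat.pow_le_pow_right (by norm_num) h3
      _ ≤ D.card := h1
  -- pigeonhole on weights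
  have hfib : D.card = ∑ t ∈ Finset.range (2^m + 1), (D.filter fun f => wt f = t).card := by
    apply Finset.card_eq_sum_card_fiberwise
    intro f _
    rw [Finset.mem_coe, Finset.mem_range]
    have := wt_le f
    omega
  obtain ⟨t0, ht0, hmax⟩ := Finset.exists_max_image (Finset.range (2^m + 1))
    (fun t => (D.filter fun f => wt f = t).card) ⟨0, by simp⟩
  set a := (D.filter fun f => wt f = t0).card with ha
  have hpig : 2 ^ (2 ^ (2*j)) ≤ (2^m + 1) * a := by
    calc 2 ^ (2 ^ (2*j)) ≤ D.card := hsize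
      _ = ∑ t ∈ Finset.range (2^m + 1), (D.filter fun f => wt f = t).card := hfib
      _ ≤ (Finset.range (2^m + 1)).card • a :=
          Finset.sum_le_card_nsmul _ _ a (fun t ht => hmax t ht)
      _ = (2^m + 1) * a := by rw [Finset.card_range, smul_eq_mul]
  -- injection into the balanced set
  have hfin : (A (m+1) (j+1) (2 ^ m)).Finite := Set.toFinite _
  have hinj : a * a ≤ (A (m+1) (j+1) (2 ^ m)).ncard := by
    rw [Set.ncard_eq_toFinset_card _ hfin]
    set s := D.filter fun f => wt f = t0 with hs
    have hprod : (s ×ˢ s).card = a * a := by rw [Finset.card_product, ha]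
    rw [← hprod]
    apply Finset.card_le_card_of_injOn
      (fun p => glue p.1 (fun x => p.2 x + 1))
    · rintro ⟨f₀, h⟩ hp
      rw [Finset.mem_coe, Finset.mem_product] at hp
      obtain ⟨hp1, hp2⟩ := hp
      simp only [hs, hD, Finset.mem_filter, Finset.mem_univ, true_and] at hp1 hp2
      rw [Finset.mem_coe, Set.Finite.mem_toFinset]
      constructor
      · exact degLE_glue hp1.1 (degLE_add hp2.1 degLE_one)
      · rw [wt_glue, hp1.2, wt_add_one, hp2.2]
        have : t0 ≤ 2 ^ m := by rw [← hp1.2]; exact wt_le _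
        omega
    · rintro ⟨f₀, h⟩ _ ⟨f₀', h'⟩ _ heq
      simp only [Prod.mk.injEq]
      have hc0 : ∀ x', glue f₀ (fun x => h x + 1) (Fin.cons 0 x')
          = glue f₀' (fun x => h' x + 1) (Fin.cons 0 x') := fun x' => congrFun heq _
      have hc1 : ∀ x', glue f₀ (fun x => h x + 1) (Fin.cons 1 x')
          = glue f₀' (fun x => h' x + 1) (Fin.cons 1 x') := fun x' => congrFun heq _
      simp only [glue_cons, if_neg (by decide : ¬ (0 : ZMod 2) = 1), if_pos rfl] at hc0 hc1
      constructor
      · exact funext hc0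
      · funext x'
        have := hc1 x'
        exact add_right_cancel this
  -- final arithmetic
  have hsq : 2 ^ (2 ^ (2*j+1)) ≤ (2^m + 1) * ((2^m + 1) * (A (m+1) (j+1) (2 ^ m)).ncard) := by
    have e : 2 ^ (2 ^ (2*j+1)) = 2 ^ (2 ^ (2*j)) * 2 ^ (2 ^ (2*j)) := by
      rw [← pow_add]
      congr 1
      ring
    calc 2 ^ (2 ^ (2*j+1)) = 2 ^ (2 ^ (2*j)) * 2 ^ (2 ^ (2*j)) := e
      _ ≤ ((2^m + 1) * a) * ((2^m + 1) * a) := Nat.mul_le_mul hpig hpig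
      _ = (2^m + 1) * ((2^m + 1) * (a * a)) := by ring
      _ ≤ (2^m + 1) * ((2^m + 1) * (A (m+1) (j+1) (2 ^ m)).ncard) := by
          apply Nat.mul_le_mul_left
          apply Nat.mul_le_mul_left
          exact hinj
  rcases Nat.eq_zero_or_pos j with hj0 | hj1
  · subst hj0
    norm_num [hm] at hsq ⊢
    omega
  · -- (2^m+1)^2 ≤ 2^(4j+3)
    have hb : (2^m + 1) * (2^m + 1) ≤ 2 ^ (4*j+3) := by
      have e1 : (2^m + 1) * (2^m + 1) = 2^(4*j+2) + 2^(2*j+2) + 1 := by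
        rw [hm]
        have : (2:ℕ)^(2*j+1) * 2^(2*j+1) = 2^(4*j+2) := by rw [← pow_add]; congr 1; ring
        have h2 : (2:ℕ)^(2*j+1) + 2^(2*j+1) = 2^(2*j+2) := by
          rw [pow_succ]; ring
        nlinarith [this, h2]
      have e2 : (2:ℕ)^(4*j+3) = 2^(4*j+2) + 2^(4*j+2) := by rw [pow_succ]; ring
      have e3 : (2:ℕ)^(2*j+2) + 1 ≤ 2^(4*j+2) := by
        have : 2*j+3 ≤ 4*j+2 := by omega
        calc (2:ℕ)^(2*j+2) + 1 ≤ 2^(2*j+2) + 2^(2*j+2) := by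
              have h1 : (1:ℕ) ≤ 2^(2*j+2) := Nat.one_le_two_pow
              omega
          _ = 2^(2*j+3) := by rw [pow_succ]; ring
          _ ≤ 2^(4*j+2) := Nat.pow_le_pow_right (by norm_num) this
      omega
    have hstep : 2 ^ (2 ^ (2*j+1)) ≤ 2 ^ (4*j+3) * (A (m+1) (j+1) (2 ^ m)).ncard := by
      calc 2 ^ (2 ^ (2*j+1)) ≤ (2^m + 1) * ((2^m + 1) * (A (m+1) (j+1) (2 ^ m)).ncard) := hsq
        _ = ((2^m + 1) * (2^m + 1)) * (A (m+1) (j+1) (2 ^ m)).ncard := by ring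
        _ ≤ 2 ^ (4*j+3) * (A (m+1) (j+1) (2 ^ m)).ncard := Nat.mul_le_mul_right _ hb
    have hpow : (2:ℕ) ^ (2 ^ (2*j+1)) = 2 * 2 ^ (2 ^ (2*j+1) - 1) := by
      have h1 : 1 ≤ 2^(2*j+1) := Nat.one_le_two_pow
      rw [← pow_succ']
      congr 1
      omega
    have hpow2 : (2:ℕ) ^ (4*j+3) = 2 * 2 ^ (4*j+2) := by rw [pow_succ]; ring
    rw [hpow, hpow2] at hstep
    have h2 : 2 * 2 ^ (4*j+2) * (A (m+1) (j+1) (2 ^ m)).ncard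
        = 2 * ((A (m+1) (j+1) (2 ^ m)).ncard * 2 ^ (4*j+2)) := by ring
    rw [h2] at hstep
    simp only [hm] at hstep ⊢
    omega

theorem stmt17 (n : ℕ) (hn : Even n) (hn2 : 2 ≤ n) :
    ((A n (n / 2) (2 ^ (n - 1))).ncard : ℚ) ≥
      2 ^ (2 ^ (n - 1) - 1) / 2 ^ (2 * n - 2) := by
  obtain ⟨r, hr⟩ := hn
  obtain ⟨j, rfl⟩ : ∃ j, r = j + 1 := ⟨r - 1, by omega⟩
  subst hr
  have e1 : (j + 1) + (j + 1) = 2*j+1+1 := by ring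
  rw [e1]
  have e2 : (2*j+1+1) / 2 = j+1 := by omega
  have e3 : 2*j+1+1 - 1 = 2*j+1 := by omega
  have e4 : 2 * (2*j+1+1) - 2 = 4*j+2 := by omega
  rw [e2, e3, e4]
  rw [ge_iff_le, div_le_iff₀ (by positivity)]
  have := core j
  calc (2:ℚ) ^ (2 ^ (2*j+1) - 1) ≤ ((((A (2*j+1+1) (j+1) (2 ^ (2*j+1))).ncard
      * 2 ^ (4*j+2) : ℕ) : ℚ)) := by exact_mod_cast Nat.cast_le.mpr this
    _ = _ := by push_cast; ring
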